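/- Let m, m' ≥ 2, n = m·m', and let a ∈ (Fin n → ZMod 2) be nonzero. If the support of a (the set of indices i with a(i) = 1) is contained in one of the blocks B_1, …, B_m, then the ZMod 2-dimension of U_a equals m'·(m−1); otherwise, the dimension of U_a equals m·m' − 1. -/

import Mathlib

/-- `B ∈ 𝓑_{m,m'}`: `B` is a symmetric `(m·m') × (m·m')` matrix over `ZMod 2` whose `m`
diagonal `m' × m'` blocks are zero (indices `i, j` lie in the same block iff
`(i : ℕ)/m' = (j : ℕ)/m'`). -/
def isB (m m' : ℕ) (B : Matrix (Fin (m * m')) (Fin (m * m')) (ZMod 2)) : Prop :=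
  (∀ i j, B i j = B j i) ∧
  ∀ i j : Fin (m * m'), (i : ℕ) / m' = (j : ℕ) / m' → B i j = 0

/-- `U_a = {a·B : B ∈ 𝓑_{m,m'}}` (a `ZMod 2`-subspace of `Fin (m·m') → ZMod 2`). -/
def Ua (m m' : ℕ) (a : Fin (m * m') → ZMod 2) : Set (Fin (m * m') → ZMod 2) :=
  {u | ∃ B, isB m m' B ∧ u = Matrix.vecMul a B}

lemma zmod2_one {x : ZMod 2} (h : x ≠ 0) : x = 1 := by revert h; revert x; decide

lemma card_block (m m' b : ℕ) (hm' : 0 < m') (hb : b < m) :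
    Fintype.card {i : Fin (m * m') // (i : ℕ) / m' = b} = m' := by
  have e : {i : Fin (m * m') // (i : ℕ) / m' = b} ≃ Fin m' := by
    refine ⟨fun i => ⟨(i : Fin (m*m')) % m', Nat.mod_lt _ hm'⟩,
      fun j => ⟨⟨m' * b + (j:ℕ), ?_⟩, ?_⟩, ?_, ?_⟩
    · calc m' * b + (j:ℕ) < m' * b + m' := by omega
        _ = m' * (b+1) := by ring
        _ ≤ m' * m := Nat.mul_le_mul_left _ (by omega)
        _ = m * m' := Nat.mul_comm _ _
    · simp [Nat.mul_add_div hm', Nat.div_eq_of_lt j.2]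
    · rintro ⟨i, hi⟩
      ext
      show m' * b + (i : ℕ) % m' = (i : ℕ)
      rw [← hi, Nat.div_add_mod]
    · intro j
      ext
      show (m' * b + (j:ℕ)) % m' = (j:ℕ)
      simp [Nat.mul_add_mod, Nat.mod_eq_of_lt j.2]
  rw [Fintype.card_congr e, Fintype.card_fin]

lemma vecMul_apply' {n : ℕ} (a : Fin n → ZMod 2) (B : Matrix (Fin n) (Fin n) (ZMod 2))
    (k : Fin n) : Matrix.vecMul a B k = ∑ j, a j * B j k := by
  simp [Matrix.vecMul, dotProduct]


lemma two_torsion (x : ZMod 2) : x + x = 0 := by revert x; decide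


lemma Ua_case1 (m m' b : ℕ) (hm' : 0 < m') (hb : b < m) (a : Fin (m * m') → ZMod 2)
    (ha : a ≠ 0) (hsupp : ∀ i : Fin (m * m'), a i ≠ 0 → (i : ℕ) / m' = b) :
    Ua m m' a = {u | ∀ i : Fin (m * m'), (i : ℕ) / m' = b → u i = 0} := by
  obtain ⟨i0, hi0⟩ : ∃ i, a i ≠ 0 := by
    by_contra h; push_neg at h; exact ha (funext fun i => h i)
  have hi0b : (i0 : ℕ) / m' = b := hsupp i0 hi0
  have hi0one : a i0 = 1 := zmod2_one hi0
  ext u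
  simp only [Ua, Set.mem_setOf_eq]
  constructor
  · rintro ⟨B, ⟨hsym, hdiag⟩, rfl⟩ i hi
    rw [vecMul_apply']
    apply Finset.sum_eq_zero
    intro j _
    by_cases hj : a j = 0
    · rw [hj, zero_mul]
    · rw [hdiag j i (by rw [hsupp j hj, hi]), mul_zero]
  · intro h
    refine ⟨fun x y => if x = i0 ∧ (y : ℕ) / m' ≠ b then u y
        else if y = i0 ∧ (x : ℕ) / m' ≠ b then u x else 0, ⟨?_, ?_⟩, ?_⟩
    · intro x y
      dsimp only
      by_cases h1 : x = i0 ∧ (y : ℕ) / m' ≠ b <;> by_cases h2 : y = i0 ∧ (x : ℕ) / m' ≠ b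
      · rw [if_pos h1, if_pos h2, h1.1, h2.1]
      · rw [if_pos h1, if_neg h2, if_pos h1]
      · rw [if_neg h1, if_pos h2, if_pos h2]
      · rw [if_neg h1, if_neg h2, if_neg h2, if_neg h1]
    · intro x y hxy
      dsimp only
      rw [if_neg, if_neg]
      · rintro ⟨rfl, hx⟩; exact hx (by omega)
      · rintro ⟨rfl, hy⟩; exact hy (by omega)
    · funext k
      refine Eq.trans ?_ (vecMul_apply' a _ k).symm
      by_cases hk : (k : ℕ) / m' = b
      · rw [h k hk]
        symm
        apply Finset.sum_eq_zero
        intro j _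
        by_cases hj : a j = 0
        · rw [hj, zero_mul]
        · have hjb := hsupp j hj
          rw [if_neg (by rintro ⟨_, hc⟩; exact hc hk), if_neg (by rintro ⟨_, hc⟩; exact hc hjb),
            mul_zero]
      · rw [Finset.sum_eq_single i0]
        · rw [if_pos ⟨rfl, hk⟩, hi0one, one_mul]
        · intro j _ hj
          rw [if_neg (by rintro ⟨hc, _⟩; exact hj hc), if_neg (by rintro ⟨rfl, _⟩; exact hk hi0b),
            mul_zero]
        · intro hcon; exact absurd (Finset.mem_univ i0) hcon

lemma Ua_case2 (m m' : ℕ) (a : Fin (m * m') → ZMod 2)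
    (i0 j0 : Fin (m * m')) (hi0 : a i0 = 1) (hj0 : a j0 = 1)
    (hne : (j0 : ℕ) / m' ≠ (i0 : ℕ) / m') :
    Ua m m' a = {u | ∑ i, a i * u i = 0} := by
  set b := (i0 : ℕ) / m' with hbdef
  have hij : i0 ≠ j0 := fun h => hne (by rw [← h])
  ext u
  simp only [Ua, Set.mem_setOf_eq]
  constructor
  · rintro ⟨B, ⟨hsym, hdiag⟩, rfl⟩
    have : ∑ i, a i * Matrix.vecMul a B i
        = ∑ p : Fin (m * m') × Fin (m * m'), a p.1 * (a p.2 * B p.2 p.1) := by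
      rw [← Finset.univ_product_univ, Finset.sum_product]
      exact Finset.sum_congr rfl fun i _ => by
        rw [vecMul_apply', Finset.mul_sum]
    rw [this]
    apply Finset.sum_ninvolution (fun p => (p.2, p.1))
    · intro p
      rcases eq_or_ne p.1 p.2 with h | h
      · exact h ▸ two_torsion _
      · dsimp only
        rw [hsym p.2 p.1]
        ring_nf
        rw [mul_two]
        exact two_torsion _
    · intro p hp
      intro hcon
      apply hp
      have h1 : p.2 = p.1 := congrArg Prod.fst hcon
      rw [h1, hdiag p.1 p.1 rfl, mul_zero, mul_zero]
    · intro p; exact Finset.mem_univ _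
    · intro p; rfl
  · intro hu
    -- construction
    set t : ZMod 2 := ∑ x : Fin (m * m'), if (x : ℕ) / m' ≠ b then a x * u x else 0 with htdef
    set s : ZMod 2 := ∑ x : Fin (m * m'), if (x : ℕ) / m' = b then a x * u x else 0 with hsdef
    have hst : s + t = 0 := by
      have h1 : s + t = ∑ x : Fin (m * m'), a x * u x := by
        rw [hsdef, htdef, ← Finset.sum_add_distrib]
        refine Finset.sum_congr rfl fun x _ => ?_
        by_cases hx : (x : ℕ) / m' = b <;> simp [hx]
      rw [h1, hu]
    set c : Fin (m * m') → ZMod 2 := fun y => if y = j0 then u j0 + u i0 + t else u y with hcdef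
    set g : Fin (m * m') → Fin (m * m') → ZMod 2 := fun x y =>
      if x = i0 ∧ (y : ℕ) / m' ≠ b then c y
      else if x = j0 ∧ (y : ℕ) / m' = b ∧ y ≠ i0 then u y else 0 with hgdef
    have hg0 : ∀ x y : Fin (m * m'), (x : ℕ) / m' = (y : ℕ) / m' → g x y = 0 := by
      intro x y hxy
      rw [hgdef]
      dsimp only
      rw [if_neg, if_neg]
      · rintro ⟨rfl, hc, _⟩; exact hne (by omega)
      · rintro ⟨rfl, hc⟩; exact hc (by omega)
    have hgoff : ∀ x y : Fin (m * m'), x ≠ i0 → x ≠ j0 → g x y = 0 := by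
      intro x y h1 h2
      rw [hgdef]
      dsimp only
      rw [if_neg (by rintro ⟨rfl, _⟩; exact h1 rfl), if_neg (by rintro ⟨rfl, _⟩; exact h2 rfl)]
    have hB : isB m m' (Matrix.of fun x y => g x y + g y x) := by
      constructor
      · intro x y; exact add_comm _ _
      · intro x y hxy
        show g x y + g y x = 0
        rw [hg0 x y hxy, hg0 y x hxy.symm, add_zero]
    refine ⟨Matrix.of fun x y => g x y + g y x, hB, ?_⟩
    funext k
    rw [vecMul_apply']
    simp only [Matrix.of_apply]
    have hsplit : ∑ x, a x * (g x k + g k x) = (∑ x, a x * g x k) + ∑ x, a x * g k x := by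
      rw [← Finset.sum_add_distrib]
      exact Finset.sum_congr rfl fun x _ => mul_add _ _ _
    rw [hsplit]
    have hT1 : (∑ x, a x * g x k) = g i0 k + g j0 k := by
      rw [Finset.sum_eq_add_of_mem i0 j0 (Finset.mem_univ _) (Finset.mem_univ _) hij]
      · rw [hi0, hj0, one_mul, one_mul]
      · intro x _ hx
        rw [hgoff x k hx.1 hx.2, mul_zero]
    rw [hT1]
    have hgi0 : ∀ x : Fin (m * m'), g i0 x = if (x : ℕ) / m' ≠ b then c x else 0 := by
      intro x
      rw [hgdef]
      dsimp only
      by_cases hx : (x : ℕ) / m' ≠ b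
      · rw [if_pos ⟨rfl, hx⟩, if_pos hx]
      · rw [if_neg (fun h => hx h.2), if_neg (fun h => hij h.1), if_neg hx]
    have hgj0 : ∀ x : Fin (m * m'), g j0 x = if ((x : ℕ) / m' = b ∧ x ≠ i0) then u x else 0 := by
      intro x
      rw [hgdef]
      dsimp only
      rw [if_neg (fun h => hij h.1.symm)]
      by_cases hx : (x : ℕ) / m' = b ∧ x ≠ i0
      · rw [if_pos ⟨rfl, hx.1, hx.2⟩, if_pos hx]
      · rw [if_neg (fun h => hx ⟨h.2.1, h.2.2⟩), if_neg hx]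
    have hT2i0 : ∑ x : Fin (m * m'), a x * g i0 x = u i0 := by
      have hpt : ∀ x : Fin (m * m'), a x * g i0 x
          = (if (x : ℕ) / m' ≠ b then a x * u x else 0) + (if x = j0 then u i0 + t else 0) := by
        intro x
        rw [hgi0 x]
        by_cases hxj : x = j0
        · rw [hxj]
          have hcj : c j0 = u j0 + u i0 + t := by rw [hcdef]; exact if_pos rfl
          rw [if_pos hne, if_pos hne, if_pos rfl, hj0, one_mul, one_mul, hcj]
          ring
        · have hcx : c x = u x := by rw [hcdef]; exact if_neg hxj
          rw [hcx, if_neg hxj, add_zero]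
          by_cases hP : (x : ℕ) / m' ≠ b
          · rw [if_pos hP, if_pos hP]
          · rw [if_neg hP, if_neg hP, mul_zero]
      rw [Finset.sum_congr rfl (fun x _ => hpt x), Finset.sum_add_distrib,
        Finset.sum_ite_eq' Finset.univ j0 (fun _ => u i0 + t), if_pos (Finset.mem_univ _),
        ← htdef]
      linear_combination two_torsion t
    have hT2j0 : ∑ x : Fin (m * m'), a x * g j0 x = s + u i0 := by
      have hpt : ∀ x : Fin (m * m'), a x * g j0 x
          = (if (x : ℕ) / m' = b then a x * u x else 0) + (if x = i0 then u i0 else 0) := by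
        intro x
        rw [hgj0 x]
        by_cases hxi : x = i0
        · rw [hxi]
          rw [if_neg (fun h => h.2 rfl), mul_zero, if_pos hbdef.symm, if_pos rfl, hi0, one_mul]
          exact (two_torsion _).symm
        · rw [if_neg hxi, add_zero]
          by_cases hxb : (x : ℕ) / m' = b
          · rw [if_pos ⟨hxb, hxi⟩, if_pos hxb]
          · rw [if_neg (fun h => hxb h.1), if_neg hxb, mul_zero]
      rw [Finset.sum_congr rfl (fun x _ => hpt x), Finset.sum_add_distrib,
        Finset.sum_ite_eq' Finset.univ i0 (fun _ => u i0), if_pos (Finset.mem_univ _),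
        ← hsdef]
    by_cases hk1 : k = i0
    · rw [hk1]
      rw [hg0 i0 i0 rfl, hgj0 i0, if_neg (fun h => h.2 rfl), hT2i0]
      ring
    · by_cases hk2 : k = j0
      · rw [hk2]
        have hcj : c j0 = u j0 + u i0 + t := by rw [hcdef]; exact if_pos rfl
        have hs_eq_t : s = t := by linear_combination hst - two_torsion t
        rw [hg0 j0 j0 rfl, hgi0 j0, if_pos hne, hT2j0, hcj, hs_eq_t]
        linear_combination -two_torsion (u i0) - two_torsion t
      · have hT2 : ∑ x : Fin (m * m'), a x * g k x = 0 :=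
          Finset.sum_eq_zero fun x _ => by rw [hgoff k x hk1 hk2, mul_zero]
        rw [hT2, add_zero]
        by_cases hkb : (k : ℕ) / m' = b
        · rw [hgi0 k, if_neg (not_not_intro hkb), hgj0 k, if_pos ⟨hkb, hk1⟩]
          ring
        · have hck : c k = u k := by rw [hcdef]; exact if_neg hk2
          rw [hgi0 k, if_pos hkb, hck, hgj0 k, if_neg (fun h => hkb h.1)]
          ring

theorem stmt_15 (m m' : ℕ) (hm : 2 ≤ m) (hm' : 2 ≤ m')
    (a : Fin (m * m') → ZMod 2) (ha : a ≠ 0) :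
    ((∃ b : ℕ, b < m ∧ ∀ i : Fin (m * m'), a i ≠ 0 → (i : ℕ) / m' = b) →
      Module.finrank (ZMod 2) (Submodule.span (ZMod 2) (Ua m m' a)) = m' * (m - 1)) ∧
    ((¬ ∃ b : ℕ, b < m ∧ ∀ i : Fin (m * m'), a i ≠ 0 → (i : ℕ) / m' = b) →
      Module.finrank (ZMod 2) (Submodule.span (ZMod 2) (Ua m m' a)) = m * m' - 1) := by
  have hm'0 : 0 < m' := by omega
  obtain ⟨i0, hi0⟩ : ∃ i, a i ≠ 0 := by
    by_contra h
    push_neg at h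
    exact ha (funext fun i => h i)
  constructor
  · rintro ⟨b, hb, hsupp⟩
    set f : {i : Fin (m * m') // (i : ℕ) / m' = b} → Fin (m * m') := Subtype.val with hf
    set F := LinearMap.funLeft (ZMod 2) (ZMod 2) f with hF
    have hset : Ua m m' a = ↑(LinearMap.ker F) := by
      rw [Ua_case1 m m' b hm'0 hb a ha hsupp]
      ext u
      simp only [Set.mem_setOf_eq, SetLike.mem_coe, LinearMap.mem_ker, hF]
      constructor
      · intro h
        funext i
        exact h i i.2
      · intro h i hi
        exact congrFun h ⟨i, hi⟩
    rw [hset, Submodule.span_eq]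
    have hsurj : Function.Surjective F :=
      LinearMap.funLeft_surjective_of_injective _ _ _ Subtype.val_injective
    have hrank := LinearMap.finrank_range_add_finrank_ker F
    rw [LinearMap.range_eq_top.mpr hsurj, finrank_top, Module.finrank_pi,
      Module.finrank_pi, card_block m m' b hm'0 hb, Fintype.card_fin] at hrank
    obtain ⟨k, rfl⟩ : ∃ k, m = k + 1 := ⟨m - 1, by omega⟩
    have hmm : m' * (k + 1 - 1) + m' = (k + 1) * m' := by
      simp only [Nat.add_sub_cancel]; ring
    omega
  · intro hnot
    have hb0 : (i0 : ℕ) / m' < m := by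
      exact Nat.div_lt_of_lt_mul (Nat.mul_comm m m' ▸ i0.2)
    push_neg at hnot
    obtain ⟨j0, hj0, hjne⟩ := hnot ((i0:ℕ)/m') hb0
    have hset : Ua m m' a = {u | ∑ i, a i * u i = 0} :=
      Ua_case2 m m' a i0 j0 (zmod2_one hi0) (zmod2_one hj0) hjne
    set G : (Fin (m * m') → ZMod 2) →ₗ[ZMod 2] ZMod 2 :=
      { toFun := fun u => ∑ i, a i * u i
        map_add' := by intro u v; simp [mul_add, Finset.sum_add_distrib]
        map_smul' := by intro c u; simp [Finset.mul_sum, mul_left_comm] } with hG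
    have hset2 : Ua m m' a = ↑(LinearMap.ker G) := by
      rw [hset]; rfl
    rw [hset2, Submodule.span_eq]
    have hsurj : Function.Surjective G := by
      intro c
      refine ⟨fun j => if j = i0 then c else 0, ?_⟩
      simp [hG, Finset.sum_ite_eq' Finset.univ i0, zmod2_one hi0]
    have hrank := LinearMap.finrank_range_add_finrank_ker G
    rw [LinearMap.range_eq_top.mpr hsurj, finrank_top, Module.finrank_self,
      Module.finrank_pi, Fintype.card_fin] at hrank
    omega
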